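/- Fix f ∈ ℂ with f ≠ 0 and f ≠ −1. For every natural number n ≥ 0 there exists a polynomial Q_n ∈ ℂ[X] with deg Q_n ≤ 2n such that for every y ∈ ℂ with y(y+1)(f+(f+1)y) ≠ 0, one has Ψ̂_n(y;f) = Q_n(y)/(f+(f+1)y)^{2n+2}. -/

import Mathlib

open Complex

/-- The functions `Ψ̂_n(·;f)`, defined recursively by
`Ψ̂_0(y;f) = -1/(f+(f+1)y)^2` and
`Ψ̂_n(y;f) = -(d/dy)[Ψ̂_{n-1}(y;f) · y(y+1)/(f+(f+1)y)]`. -/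
noncomputable def PsiHat (f : ℂ) : ℕ → ℂ → ℂ
  | 0 => fun y => -1 / (f + (f + 1) * y) ^ 2
  | n + 1 => fun y =>
      -deriv (fun w => PsiHat f n w * (w * (w + 1) / (f + (f + 1) * w))) y

/-- The primitive `θ(y) = (f/2)(log y)^2 + (log y)·log(1+y) + Li₂(-y)`,
with `log` the principal branch and `Li₂(w) = ∑_{k≥1} w^k/k^2`. -/
noncomputable def theta (f : ℂ) (y : ℂ) : ℂ :=
  f / 2 * Complex.log y ^ 2 + Complex.log y * Complex.log (1 + y) +
    ∑' k : ℕ, (-y) ^ (k + 1) / ((k : ℂ) + 1) ^ 2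

/-- Structural form of `Ψ̂_n`: for each `n` there is a polynomial `Q_n` of
degree at most `2n` with `Ψ̂_n(y;f) = Q_n(y)/(f+(f+1)y)^(2n+2)` wherever
`y(y+1)(f+(f+1)y) ≠ 0`. -/
theorem psiHat_eq_poly_div
    (f : ℂ) (hf0 : f ≠ 0) (hf1 : f ≠ -1) (n : ℕ) :
    ∃ Q : Polynomial ℂ, Q.degree ≤ (2 * n : ℕ) ∧
      ∀ y : ℂ, y * (y + 1) * (f + (f + 1) * y) ≠ 0 →
        PsiHat f n y = Q.eval y / (f + (f + 1) * y) ^ (2 * n + 2) := by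
  induction n with
  | zero =>
    refine ⟨Polynomial.C (-1), ?_, ?_⟩
    · simpa using Polynomial.degree_C_le
    · intro y hy
      simp [PsiHat]
  | succ n ih =>
    obtain ⟨Q, hQdeg, hQ⟩ := ih
    set D : Polynomial ℂ := Polynomial.C f + Polynomial.C (f + 1) * Polynomial.X with hD
    set P : Polynomial ℂ := Q * (Polynomial.X * (Polynomial.X + 1)) with hPdef
    have hDdeg : D.degree ≤ 1 := by
      rw [hD]
      apply le_trans (Polynomial.degree_add_le _ _)
      apply max_le
      · exact le_trans Polynomial.degree_C_le (by norm_num)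
      · apply le_trans (Polynomial.degree_mul_le _ _)
        calc (Polynomial.C (f+1)).degree + Polynomial.X.degree
            ≤ 0 + 1 := add_le_add Polynomial.degree_C_le (le_of_eq (Polynomial.degree_X))
          _ = 1 := by norm_num
    have hXdeg : (Polynomial.X * (Polynomial.X + 1) : Polynomial ℂ).degree ≤ (2 : ℕ) := by
      apply le_trans (Polynomial.degree_mul_le _ _)
      calc (Polynomial.X : Polynomial ℂ).degree + (Polynomial.X + 1 : Polynomial ℂ).degree
          ≤ 1 + 1 := add_le_add (le_of_eq Polynomial.degree_X)
            (le_trans (Polynomial.degree_add_le _ _) (max_le (le_of_eq Polynomial.degree_X)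
              (le_trans Polynomial.degree_one_le (by norm_num))))
        _ = ((2 : ℕ) : WithBot ℕ) := by norm_num
    have hPdeg : P.degree ≤ ((2 * n + 2 : ℕ) : WithBot ℕ) := by
      rw [hPdef]
      apply le_trans (Polynomial.degree_mul_le _ _)
      calc Q.degree + (Polynomial.X * (Polynomial.X + 1) : Polynomial ℂ).degree
          ≤ ((2 * n : ℕ) : WithBot ℕ) + ((2 : ℕ) : WithBot ℕ) := add_le_add hQdeg hXdeg
        _ = ((2 * n + 2 : ℕ) : WithBot ℕ) := by norm_cast
    have hPnat : P.natDegree ≤ 2 * n + 2 := Polynomial.natDegree_le_iff_degree_le.mpr hPdeg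
    have hP'nat : (Polynomial.derivative P).natDegree ≤ 2 * n + 1 :=
      le_trans (Polynomial.natDegree_derivative_le P) (by omega)
    have hP'deg : (Polynomial.derivative P).degree ≤ ((2 * n + 1 : ℕ) : WithBot ℕ) :=
      Polynomial.natDegree_le_iff_degree_le.mp hP'nat
    refine ⟨-(Polynomial.derivative P * D -
        Polynomial.C ((2 * n + 3 : ℕ) : ℂ) * Polynomial.C (f + 1) * P), ?_, ?_⟩
    · rw [Polynomial.degree_neg]
      have h2 : ((2 * (n + 1) : ℕ) : WithBot ℕ) = ((2 * n + 2 : ℕ) : WithBot ℕ) := by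
        push_cast; ring
      rw [h2]
      apply le_trans (Polynomial.degree_sub_le _ _)
      apply max_le
      · apply le_trans (Polynomial.degree_mul_le _ _)
        calc (Polynomial.derivative P).degree + D.degree
            ≤ ((2 * n + 1 : ℕ) : WithBot ℕ) + 1 := add_le_add hP'deg hDdeg
          _ = ((2 * n + 2 : ℕ) : WithBot ℕ) := by norm_cast
      · apply le_trans (Polynomial.degree_mul_le _ _)
        calc (Polynomial.C ((2 * n + 3 : ℕ) : ℂ) * Polynomial.C (f + 1)).degree + P.degree
            ≤ 0 + ((2 * n + 2 : ℕ) : WithBot ℕ) := by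
              apply add_le_add _ hPdeg
              rw [← Polynomial.C_mul]
              exact Polynomial.degree_C_le
          _ = ((2 * n + 2 : ℕ) : WithBot ℕ) := by rw [zero_add]
    · intro y hy
      have hy3 : f + (f + 1) * y ≠ 0 := right_ne_zero_of_mul hy
      have hopen : IsOpen {w : ℂ | w * (w + 1) * (f + (f + 1) * w) ≠ 0} := by
        have hc : Continuous fun w : ℂ => w * (w + 1) * (f + (f + 1) * w) := by continuity
        exact isOpen_ne_fun hc continuous_const
      have hev : (fun w => PsiHat f n w * (w * (w + 1) / (f + (f + 1) * w))) =ᶠ[nhds y]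
          (fun w => P.eval w / (f + (f + 1) * w) ^ (2 * n + 3)) := by
        filter_upwards [hopen.mem_nhds hy] with w hw
        have hw3 : f + (f + 1) * w ≠ 0 := right_ne_zero_of_mul hw
        rw [hQ w hw, hPdef]
        simp only [Polynomial.eval_mul, Polynomial.eval_X, Polynomial.eval_add,
          Polynomial.eval_one]
        rw [div_mul_div_comm, ← pow_succ]
      have hDy : HasDerivAt (fun w : ℂ => f + (f + 1) * w) (f + 1) y := by
        simpa using ((hasDerivAt_id y).const_mul (f + 1)).const_add f
      have h2 : HasDerivAt (fun w : ℂ => (f + (f + 1) * w) ^ (2 * n + 3))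
          (((2 * n + 3 : ℕ) : ℂ) * (f + (f + 1) * y) ^ (2 * n + 2) * (f + 1)) y := by
        simpa using hDy.fun_pow (2 * n + 3)
      have hder : HasDerivAt (fun w => P.eval w / (f + (f + 1) * w) ^ (2 * n + 3))
          ((Polynomial.eval y (Polynomial.derivative P) * (f + (f + 1) * y) ^ (2 * n + 3) -
            P.eval y * (((2 * n + 3 : ℕ) : ℂ) * (f + (f + 1) * y) ^ (2 * n + 2) * (f + 1))) /
            ((f + (f + 1) * y) ^ (2 * n + 3)) ^ 2) y :=
        (P.hasDerivAt y).div h2 (pow_ne_zero _ hy3)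
      show -deriv (fun w => PsiHat f n w * (w * (w + 1) / (f + (f + 1) * w))) y = _
      rw [hev.deriv_eq, hder.deriv]
      simp only [Polynomial.eval_neg, Polynomial.eval_sub, Polynomial.eval_mul,
        Polynomial.eval_C, Polynomial.eval_add, Polynomial.eval_X, hD]
      field_simp
      ring
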